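/- Let k be a natural number, G a graph, P an induced path in G, and (T, λ) a rank decomposition of G of width at most k. For any edge e of T, if (X, Y) is the bipartition of V(P) induced by the two components of T − e, then the induced subgraph P[X] has at most k + 1 connected components. -/

import Mathlib

open SimpleGraph

/-- Sorted list of the tuple set `S^d`: tuples with entries in {1,3} except
the last entry which is in {1,2,3,4}, of length between 1 and `d`,
listed in lexicographic order. -/
def Tl : ℕ → List (List ℕ)
  | 0 => []
  | k+1 => [[1]] ++ (Tl k).map (fun a => 1 :: a) ++ [[2], [3]]
            ++ (Tl k).map (fun a => 3 :: a) ++ [[4]]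

/-- Strict lexicographic order on tuples (a proper prefix is smaller). -/
def lexLt (a b : List ℕ) : Prop := List.Lex (· < ·) a b

def lexLe (a b : List ℕ) : Prop := a = b ∨ lexLt a b

/-- `v` is the successor of `u` in the lexicographic order on `S^d`. -/
def IsSucc (d : ℕ) (u v : List ℕ) : Prop :=
  v ∈ Tl d ∧ lexLt u v ∧ ∀ w ∈ Tl d, lexLt u w → lexLe v w

/-- The interval `[a,b]` in `S^d`. -/
def interval (d : ℕ) (a b : List ℕ) : Set (List ℕ) :=
  {c | c ∈ Tl d ∧ lexLe a c ∧ lexLe c b}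

/-- `[a,b]` is a proper interval: no interior element has length `l(a)` or `l(b)`. -/
def ProperInterval (d : ℕ) (a b : List ℕ) : Prop :=
  a ∈ Tl d ∧ b ∈ Tl d ∧ lexLe a b ∧
  ∀ c ∈ interval d a b, c ≠ a → c ≠ b →
    c.length ≠ a.length ∧ c.length ≠ b.length

/-- The set of left endpoints of flat steps of the interval `[a,b]`. -/
def flatSteps (d : ℕ) (a b : List ℕ) : Set (List ℕ) :=
  {c | c ∈ Tl d ∧ lexLe a c ∧ lexLt c b ∧ ∃ v, IsSucc d c v ∧ v.length = c.length}

/-- Vertices of `G_d`: elements of `S^d`, subdivision vertices, and centers. -/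
inductive Vtx where
  | elt : List ℕ → Vtx
  | sub : ℕ → Fin 2 → Vtx
  | ctr : ℕ → Vtx
deriving DecidableEq

/-- The path `P_d` as a list of vertices: the elements of `S^d` in order,
with two subdivision vertices between consecutive elements of equal length
and one otherwise. -/
def pathList (d : ℕ) : List Vtx :=
  (((Tl d).zipIdx).map Prod.swap).flatMap (fun p =>
    Vtx.elt p.2 :: (match (Tl d)[p.1 + 1]? with
      | none => []
      | some b =>
        if p.2.length = b.length then [Vtx.sub p.1 0, Vtx.sub p.1 1]
        else [Vtx.sub p.1 0]))

/-- `x` and `y` are consecutive in the list `l`. -/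
def ChainAdj {α : Type} (l : List α) (x y : α) : Prop :=
  ∃ i, (l[i]? = some x ∧ l[i+1]? = some y) ∨
       (l[i]? = some y ∧ l[i+1]? = some x)

/-- Adjacency from a center vertex. -/
def ctrAdj (d : ℕ) : Vtx → Vtx → Prop
  | Vtx.ctr k, Vtx.ctr m => k ≠ m ∧ 1 ≤ k ∧ k ≤ d ∧ 1 ≤ m ∧ m ≤ d
  | Vtx.ctr k, Vtx.elt a => 1 ≤ k ∧ k ≤ d ∧ a ∈ Tl d ∧ a.length = k
  | _, _ => False

/-- The vertex set of `G_d`. -/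
def VSet (d : ℕ) : Finset Vtx :=
  (pathList d).toFinset ∪ (Finset.Icc 1 d).image Vtx.ctr

def GdAdj (d : ℕ) (x y : Vtx) : Prop :=
  x ≠ y ∧ (ChainAdj (pathList d) x y ∨ ctrAdj d x y ∨ ctrAdj d y x)

/-- The graph `G_d`. -/
def Gd (d : ℕ) : SimpleGraph {x // x ∈ VSet d} where
  Adj x y := GdAdj d x.1 y.1
  symm := ⟨by
    rintro x y ⟨hne, h⟩
    refine ⟨hne.symm, ?_⟩
    rcases h with ⟨i, hi⟩ | h | h
    · exact Or.inl ⟨i, hi.symm⟩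
    · exact Or.inr (Or.inr h)
    · exact Or.inr (Or.inl h)⟩
  loopless := ⟨fun x h => h.1 rfl⟩

/-- A rank decomposition of a graph `G`: a finite cubic tree together with a
bijection from the vertices of `G` to the leaves of the tree. -/
structure RankDecomp {V : Type} [Fintype V] (G : SimpleGraph V) where
  t : Type
  fin : Fintype t
  tree : SimpleGraph t
  conn : tree.Connected
  acyc : tree.IsAcyclic
  two_le : 2 ≤ Nat.card t
  cubic : ∀ v : t, (tree.neighborSet v).ncard = 1 ∨ (tree.neighborSet v).ncard = 3
  leafEquiv : V ≃ {v : t // (tree.neighborSet v).ncard = 1}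

/-- The set of vertices of `G` whose leaf lies on the side of `a` of
the edge `ab` of the decomposition tree. -/
def RankDecomp.side {V : Type} [Fintype V] {G : SimpleGraph V}
    (D : RankDecomp G) (a b : D.t) : Set V :=
  {x | (D.tree.deleteEdges {s(a, b)}).Reachable (D.leafEquiv x).1 a}

/-- The cutrank function of `G`: the GF(2)-rank of the adjacency submatrix
between `X` and its complement. -/
noncomputable def cutRank {V : Type} [Fintype V] (G : SimpleGraph V) (X : Set V) : ℕ :=
  haveI : Fintype ↥X := Fintype.ofFinite _
  haveI : Fintype ↥(Xᶜ) := Fintype.ofFinite _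
  haveI : DecidableRel G.Adj := Classical.decRel _
  Matrix.rank (Matrix.of (fun (x : ↥X) (y : ↥(Xᶜ)) =>
    if G.Adj x.1 y.1 then (1 : ZMod 2) else 0))

/-- The decomposition `D` has width at most `k`. -/
def RankDecomp.WidthLE {V : Type} [Fintype V] {G : SimpleGraph V}
    (D : RankDecomp G) (k : ℕ) : Prop :=
  ∀ a b : D.t, D.tree.Adj a b → cutRank G (D.side a b) ≤ k

/-- The rank-width of `G`. -/
noncomputable def rankwidth {V : Type} [Fintype V] (G : SimpleGraph V) : ℕ :=
  sInf {k | ∃ D : RankDecomp G, D.WidthLE k}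

/-- `l` is an induced path in `G`: its vertices are distinct and two of them
are adjacent in `G` iff they are consecutive on `l`. -/
def IsInducedPathList {V : Type} (G : SimpleGraph V) (l : List V) : Prop :=
  l.Nodup ∧ ∀ x ∈ l, ∀ y ∈ l, (G.Adj x y ↔ ChainAdj l x y)

/-- The diamond: the complete graph on four vertices minus an edge. -/
def diamond : SimpleGraph (Fin 4) := (⊤ : SimpleGraph (Fin 4)).deleteEdges {s(2, 3)}

private lemma rank_submatrix_rows_le {K : Type} [Field K] {m n o : Type}
    [Fintype m] [Fintype n] [Fintype o] (A : Matrix m n K) (f : o → m) :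
    (A.submatrix f id).rank ≤ A.rank := by
  have h : (A.submatrix f id).mulVecLin = LinearMap.funLeft K K f ∘ₗ A.mulVecLin := by
    have h2 := Matrix.mulVecLin_submatrix f (Equiv.refl n) A
    simp at h2; rw [h2]; rfl
  rw [Matrix.rank, Matrix.rank, h, LinearMap.range_comp]
  exact Submodule.finrank_map_le _ _

private lemma rank_submatrix_le' {K : Type} [Field K] {m n o p : Type}
    [Fintype m] [Fintype n] [Fintype o] [Fintype p]
    (A : Matrix m n K) (f : o → m) (g : p → n) :
    (A.submatrix f g).rank ≤ A.rank := by
  have h1 : A.submatrix f g = (A.submatrix f id).submatrix id g := rfl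
  have hc : ((A.submatrix f id).submatrix id g).rank ≤ (A.submatrix f id).rank := by
    rw [← Matrix.rank_transpose ((A.submatrix f id).submatrix id g),
      ← Matrix.rank_transpose (A.submatrix f id), Matrix.transpose_submatrix]
    exact rank_submatrix_rows_le _ g
  rw [h1]
  exact le_trans hc (rank_submatrix_rows_le A f)

private lemma card_le_cutRank {V : Type} [Fintype V] (G : SimpleGraph V) (X : Set V)
    {ι : Type} [Fintype ι] (f : ι → ↥X) (g : ι → ↥(Xᶜ)) (μ : ι → ℕ)
    (hμ : Function.Injective μ)
    (hdiag : ∀ i, G.Adj (f i).1 (g i).1)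
    (hoff : ∀ i j, μ i < μ j → ¬ G.Adj (f i).1 (g j).1) :
    Fintype.card ι ≤ cutRank G X := by
  classical
  letI iX : Fintype ↥X := Fintype.ofFinite _
  letI iXc : Fintype ↥(Xᶜ) := Fintype.ofFinite _
  letI dA : DecidableRel G.Adj := Classical.decRel _
  have hceq : cutRank G X = Matrix.rank (Matrix.of (fun (x : ↥X) (y : ↥(Xᶜ)) =>
      @ite _ (G.Adj x.1 y.1) (dA x.1 y.1) (1 : ZMod 2) 0)) := by
    unfold cutRank
    rfl
  rw [hceq]
  refine le_trans ?_ (rank_submatrix_le' _ f g)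
  letI lo : LinearOrder ι := LinearOrder.lift' μ hμ
  have hlt : ∀ i j : ι, i < j → μ i < μ j := by
    intro i j hij
    rcases lt_trichotomy (μ i) (μ j) with h | h | h
    · exact h
    · exact absurd (hμ h) (ne_of_lt hij)
    · exact absurd (le_of_lt hij) (not_le.2 (show j < i from h))
  set N := (Matrix.of (fun (x : ↥X) (y : ↥(Xᶜ)) =>
    @ite _ (G.Adj x.1 y.1) (dA x.1 y.1) (1 : ZMod 2) 0)).submatrix f g with hN
  have htri : N.BlockTriangular OrderDual.toDual := by
    intro i j hij
    have hij' : i < j := hij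
    show (@ite _ (G.Adj (f i).1 (g j).1) (dA _ _) (1 : ZMod 2) 0) = 0
    rw [if_neg (hoff i j (hlt i j hij'))]
  have hdet : N.det = 1 := by
    rw [Matrix.det_of_lowerTriangular N htri]
    have : ∀ i, N i i = 1 := by
      intro i
      show (@ite _ (G.Adj (f i).1 (g i).1) (dA _ _) (1 : ZMod 2) 0) = 1
      rw [if_pos (hdiag i)]
    simp [this]
  have hu : IsUnit N := (Matrix.isUnit_iff_isUnit_det N).2 (by rw [hdet]; exact isUnit_one)
  rw [Matrix.rank_of_isUnit N hu]

/-- In a rank decomposition of width at most `k`, any edge of the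
tree splits an induced path `P` of `G` into at most `k+1` components on each side. -/
theorem stmt0 {V : Type} [Fintype V] (G : SimpleGraph V) (k : ℕ)
    (l : List V) (hl : IsInducedPathList G l)
    (D : RankDecomp G) (hw : D.WidthLE k)
    (a b : D.t) (hab : D.tree.Adj a b) :
    Nat.card ((G.induce ({x | x ∈ l} ∩ D.side a b)).ConnectedComponent) ≤ k + 1 := by
  classical
  obtain ⟨hnd, hadj⟩ := hl
  set X := D.side a b with hXdef
  set S : Set V := {x | x ∈ l} ∩ X with hSdef
  set n := l.length with hn
  -- index facts
  have hget : ∀ v ∈ l, l[l.idxOf v]? = some v := fun v hv => List.getElem?_idxOf hv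
  have hltn : ∀ v ∈ l, l.idxOf v < n := fun v hv => List.idxOf_lt_length_iff.2 hv
  have hmem : ∀ (i : ℕ) (v : V), l[i]? = some v → v ∈ l := by
    intro i v hi
    exact List.mem_of_getElem? hi
  have huniq : ∀ (i : ℕ) (v : V), v ∈ l → l[i]? = some v → i = l.idxOf v := by
    intro i v hv hi
    have hilt : i < n := by
      by_contra h
      rw [List.getElem?_eq_none (le_of_not_gt h)] at hi
      exact Option.some_ne_none v hi.symm
    exact (List.getElem?_inj hilt hnd).1 (by rw [hi, hget v hv])
  have hchain : ∀ x ∈ l, ∀ y ∈ l, (ChainAdj l x y ↔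
      (l.idxOf y = l.idxOf x + 1 ∨ l.idxOf x = l.idxOf y + 1)) := by
    intro x hx y hy
    constructor
    · rintro ⟨i, ⟨h1, h2⟩ | ⟨h1, h2⟩⟩
      · left; rw [← huniq i x hx h1, ← huniq (i+1) y hy h2]
      · right; rw [← huniq i y hy h1, ← huniq (i+1) x hx h2]
    · rintro (h | h)
      · exact ⟨l.idxOf x, Or.inl ⟨hget x hx, by rw [← h]; exact hget y hy⟩⟩
      · exact ⟨l.idxOf y, Or.inr ⟨hget y hy, by rw [← h]; exact hget x hx⟩⟩
  -- components
  haveI : Fintype ↥S := Fintype.ofFinite _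
  haveI : Finite ((G.induce S).ConnectedComponent) := Quot.finite _
  set F : (G.induce S).ConnectedComponent → Finset ↥S := fun C =>
    Finset.univ.filter (fun v => (G.induce S).connectedComponentMk v = C) with hF
  have hFne : ∀ C, ((F C).image (fun v => l.idxOf v.1)).Nonempty := by
    intro C
    obtain ⟨v, hv⟩ := C.exists_rep
    refine Finset.Nonempty.image ⟨v, ?_⟩ _
    rw [hF]
    simp only [Finset.mem_filter, Finset.mem_univ, true_and]
    exact hv
  set m : (G.induce S).ConnectedComponent → ℕ := fun C =>
    ((F C).image (fun v => l.idxOf v.1)).max' (hFne C) with hm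
  have hwit : ∀ C, ∃ v : ↥S, (G.induce S).connectedComponentMk v = C ∧ l.idxOf v.1 = m C := by
    intro C
    have h := ((F C).image (fun v => l.idxOf v.1)).max'_mem (hFne C)
    rw [Finset.mem_image] at h
    obtain ⟨v, hv1, hv2⟩ := h
    rw [hF] at hv1
    simp only [Finset.mem_filter, Finset.mem_univ, true_and] at hv1
    exact ⟨v, hv1, hv2⟩
  choose w hwmk hwidx using hwit
  have hmax : ∀ (C) (v : ↥S), (G.induce S).connectedComponentMk v = C → l.idxOf v.1 ≤ m C := by
    intro C v hv
    have hvF : v ∈ F C := by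
      rw [hF]
      simp only [Finset.mem_filter, Finset.mem_univ, true_and]
      exact hv
    exact Finset.le_max' ((F C).image (fun v => l.idxOf v.1)) _
      (Finset.mem_image_of_mem _ hvF)
  have hwl : ∀ C, (w C).1 ∈ l := fun C => (w C).2.1
  have hwX : ∀ C, (w C).1 ∈ X := fun C => (w C).2.2
  have hmlt : ∀ C, m C < n := fun C => by rw [← hwidx C]; exact hltn _ (hwl C)
  have hgw : ∀ C, l[m C]? = some (w C).1 := by
    intro C; rw [← hwidx C]; exact hget _ (hwl C)
  have hminj : Function.Injective m := by
    intro C C' h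
    have h2 : l[m C]? = some (w C').1 := by rw [h]; exact hgw C'
    have h3 : (w C) = (w C') :=
      Subtype.ext (Option.some_injective _ ((hgw C).symm.trans h2))
    rw [← hwmk C, ← hwmk C', h3]
  -- successor of a maximal vertex is outside X
  have hsucc : ∀ C, m C + 1 < n → ∃ y, l[m C + 1]? = some y ∧ y ∈ l ∧ y ∉ X := by
    intro C hC
    obtain ⟨y, hy⟩ : ∃ y, l[m C + 1]? = some y := by
      rw [List.getElem?_eq_getElem hC]; exact ⟨_, rfl⟩
    have hyl : y ∈ l := hmem _ _ hy
    refine ⟨y, hy, hyl, fun hyX => ?_⟩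
    have hyS : y ∈ S := ⟨hyl, hyX⟩
    have hidxy : l.idxOf y = m C + 1 := (huniq _ _ hyl hy).symm
    have hca : ChainAdj l (w C).1 y := ⟨m C, Or.inl ⟨hgw C, hy⟩⟩
    have hA : G.Adj (w C).1 y := (hadj _ (hwl C) _ hyl).2 hca
    have hA' : (G.induce S).Adj (w C) ⟨y, hyS⟩ := hA
    have hmkeq : (G.induce S).connectedComponentMk ⟨y, hyS⟩ = C := by
      rw [← hwmk C]
      exact (SimpleGraph.ConnectedComponent.connectedComponentMk_eq_of_adj hA'.symm)
    have h1 := hmax C ⟨y, hyS⟩ hmkeq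
    rw [hidxy] at h1
    omega
  choose ynext hyget hynl hynX using hsucc
  -- step A : card ≤ card κ' + 1
  have hstepA : Nat.card ((G.induce S).ConnectedComponent) ≤
      Nat.card {C : (G.induce S).ConnectedComponent // m C + 1 < n} + 1 := by
    have hinj : Function.Injective (fun C : (G.induce S).ConnectedComponent =>
        if h : m C + 1 < n then (some ⟨C, h⟩ : Option {C // m C + 1 < n}) else none) := by
      intro C C' hCC'
      dsimp only at hCC'
      by_cases h1 : m C + 1 < n <;> by_cases h2 : m C' + 1 < n
      · rw [dif_pos h1, dif_pos h2] at hCC'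
        exact congrArg Subtype.val (Option.some_injective _ hCC')
      · rw [dif_pos h1, dif_neg h2] at hCC'
        exact absurd hCC' (by simp)
      · rw [dif_neg h1, dif_pos h2] at hCC'
        exact absurd hCC' (by simp)
      · have hc := hmlt C
        have hc' := hmlt C'
        exact hminj (by omega)
    calc Nat.card ((G.induce S).ConnectedComponent)
        ≤ Nat.card (Option {C : (G.induce S).ConnectedComponent // m C + 1 < n}) :=
          Nat.card_le_card_of_injective _ hinj
      _ = _ := Finite.card_option
  -- step B : card κ' ≤ k
  haveI : Fintype {C : (G.induce S).ConnectedComponent // m C + 1 < n} := Fintype.ofFinite _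
  have hstepB : Nat.card {C : (G.induce S).ConnectedComponent // m C + 1 < n} ≤ k := by
    rw [Nat.card_eq_fintype_card]
    refine le_trans (card_le_cutRank G X
      (fun C => (⟨(w C.1).1, hwX C.1⟩ : ↥X))
      (fun C => (⟨ynext C.1 C.2, hynX C.1 C.2⟩ : ↥(Xᶜ)))
      (fun C => m C.1) ?_ ?_ ?_) (hw a b hab)
    · intro C C' h
      exact Subtype.ext (hminj h)
    · intro C
      have hca : ChainAdj l (w C.1).1 (ynext C.1 C.2) := ⟨m C.1, Or.inl ⟨hgw C.1, hyget C.1 C.2⟩⟩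
      exact (hadj _ (hwl C.1) _ (hynl C.1 C.2)).2 hca
    · intro C C' hltCC hA
      have hltCC' : m C.1 < m C'.1 := hltCC
      have hca := (hadj _ (hwl C.1) _ (hynl C'.1 C'.2)).1 hA
      rw [hchain _ (hwl C.1) _ (hynl C'.1 C'.2)] at hca
      have hiw : l.idxOf (w C.1).1 = m C.1 := hwidx C.1
      have hiy : m C'.1 + 1 = l.idxOf (ynext C'.1 C'.2) :=
        huniq _ _ (hynl C'.1 C'.2) (hyget C'.1 C'.2)
      rcases hca with hca | hca <;> omega
  omega
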